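/- In any ℚ(v)-algebra, suppose K is invertible and E, F satisfy EF − FE = (K−K^{−1})/(v−v^{−1}) with KE = v²EK and KF = v^{−2}FK. Then for all a, b ≥ 1: E^{(a)}F^{(b)} = Σ_{t=0}^{min(a,b)} F^{(b−t)} · [K; 2t−a−b choose t] · E^{(a−t)}, where E^{(m)} = E^m/[m]!, F^{(m)} = F^m/[m]!, and [K; c choose t] = Π_{s=1}^{t} (K v^{c−s+1} − K^{−1} v^{−c+s−1})/(v^s − v^{−s}). -/

import Mathlib

noncomputable def v : RatFunc ℚ := RatFunc.X

/-- The quantum integer `[m] = (v^m - v^{-m})/(v - v^{-1})`. -/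
noncomputable def qint (m : ℤ) : RatFunc ℚ := (v ^ m - v ^ (-m)) / (v - v⁻¹)

/-- The quantum factorial `[m]! = [m][m-1]⋯[1]`. -/
noncomputable def qfact (m : ℕ) : RatFunc ℚ :=
  ∏ s ∈ Finset.range m, qint ((s : ℤ) + 1)

lemma v_ne_zero : v ≠ 0 := RatFunc.X_ne_zero

lemma v_pow_ne_one {n : ℕ} (hn : 0 < n) : v ^ n ≠ 1 := by
  intro h
  have h1 : (algebraMap (Polynomial ℚ) (RatFunc ℚ)) (Polynomial.X ^ n)
      = algebraMap (Polynomial ℚ) (RatFunc ℚ) 1 := by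
    rw [map_pow, map_one]
    exact h
  have h2 : (Polynomial.X : Polynomial ℚ) ^ n = 1 := RatFunc.algebraMap_injective ℚ h1
  have := congrArg Polynomial.natDegree h2
  simp [Polynomial.natDegree_X_pow] at this
  omega

lemma v_zpow_sub_ne_zero {m : ℤ} (hm : 0 < m) : v ^ m - v ^ (-m) ≠ 0 := by
  intro h
  have h2 : v ^ m = v ^ (-m) := sub_eq_zero.mp h
  have h3 : v ^ (m + m) = 1 := by
    have := congrArg (· * v ^ m) h2
    simp only [← zpow_add₀ v_ne_zero] at this
    simpa using this
  have h4 : v ^ ((m + m).toNat) = 1 := by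
    rw [← zpow_natCast, Int.toNat_of_nonneg (by omega)]; exact h3
  exact v_pow_ne_one (by omega) h4

lemma vv_ne_zero : v - v⁻¹ ≠ 0 := by
  have := v_zpow_sub_ne_zero (m := 1) one_pos
  simpa [zpow_one] using this

lemma qint_ne_zero {m : ℤ} (hm : 0 < m) : qint m ≠ 0 :=
  div_ne_zero (v_zpow_sub_ne_zero hm) vv_ne_zero

lemma qint_zero : qint 0 = 0 := by simp [qint]

lemma qint_one : qint 1 = 1 := by
  simp only [qint, zpow_one, zpow_neg_one]
  exact div_self vv_ne_zero

lemma qfact_succ (m : ℕ) : qfact (m + 1) = qfact m * qint ((m : ℤ) + 1) :=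
  Finset.prod_range_succ _ m

lemma qfact_ne_zero (m : ℕ) : qfact m ≠ 0 := by
  induction m with
  | zero => simp [qfact]
  | succ n ih =>
    rw [qfact_succ]
    exact mul_ne_zero ih (qint_ne_zero (by omega))

lemma qmul (x y p q : ℤ) (h1 : x + y = p) (h2 : y - x = q) :
    qint x * v ^ y = (v ^ p - v ^ q) / (v - v⁻¹) := by
  rw [qint, div_mul_eq_mul_div, sub_mul, ← zpow_add₀ v_ne_zero, ← zpow_add₀ v_ne_zero,
    h1, show -x + y = q by omega]

lemma one_eq_div : (1 : RatFunc ℚ) = (v ^ (1:ℤ) - v ^ (-1:ℤ)) / (v - v⁻¹) := by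
  rw [zpow_one, zpow_neg_one]
  exact (div_self vv_ne_zero).symm

lemma sid1 (a b t : ℤ) :
    qint (a+1) * v ^ (2*t-a-b-1) = qint (a+1-t) * v ^ (t-a-b-1) + qint t * v ^ (t-b) := by
  rw [qmul (a+1) (2*t-a-b-1) (2*t-b) (2*t-2*a-b-2) (by ring) (by ring),
    qmul (a+1-t) (t-a-b-1) (-b) (2*t-2*a-b-2) (by ring) (by ring),
    qmul t (t-b) (2*t-b) (-b) (by ring) (by ring),
    ← add_div]
  congr 1
  ring

lemma sid2 (a b t : ℤ) :
    qint (a+1) * v ^ (-(2*t-a-b-1)) = qint (a+1-t) * v ^ (-(t-a-b-1)) + qint t * v ^ (-(t-b)) := by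
  rw [qmul (a+1) (-(2*t-a-b-1)) (2*a+b-2*t+2) (b-2*t) (by ring) (by ring),
    qmul (a+1-t) (-(t-a-b-1)) (2*a+b-2*t+2) b (by ring) (by ring),
    qmul t (-(t-b)) b (b-2*t) (by ring) (by ring),
    ← add_div]
  congr 1
  ring

lemma grec1 (n : ℤ) : 1 + qint n * v ^ (-(n+1)) = qint (n+1) * v ^ (-n) := by
  rw [qmul n (-(n+1)) (-1) (-2*n-1) (by ring) (by ring),
    qmul (n+1) (-n) 1 (-2*n-1) (by ring) (by ring),
    one_eq_div, ← add_div]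
  congr 1
  ring

lemma grec2 (n : ℤ) : 1 + qint n * v ^ (n+1) = qint (n+1) * v ^ n := by
  rw [qmul n (n+1) (2*n+1) 1 (by ring) (by ring),
    qmul (n+1) n (2*n+1) (-1) (by ring) (by ring),
    one_eq_div, ← add_div]
  congr 1
  ring

section Alg
variable {A : Type*} [Ring A] [Algebra (RatFunc ℚ) A]

noncomputable def Af (K Ki : A) (x : ℤ) : A := v ^ x • K - v ^ (-x) • Ki

noncomputable def Gg (K Ki : A) (m : ℤ) : A :=
  (v - v⁻¹)⁻¹ • (v ^ (-m) • K - v ^ m • Ki)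

noncomputable def Nb (K Ki : A) (c : ℤ) : ℕ → A
  | 0 => 1
  | (t+1) => Nb K Ki c t * Af K Ki (c - t)

variable (E F K Ki : A)

lemma Gg_eq (m : ℤ) : Gg K Ki m = (v - v⁻¹)⁻¹ • Af K Ki (-m) := by
  rw [Gg, Af, neg_neg]

section
variable (hK : K * Ki = 1) (hK' : Ki * K = 1)
    (hKE : K * E = (v ^ (2 : ℤ)) • (E * K))
    (hKF : K * F = (v ^ (-2 : ℤ)) • (F * K))

include hKE in
lemma EK : E * K = (v ^ (-2 : ℤ)) • (K * E) := by
  rw [hKE, smul_smul, ← zpow_add₀ v_ne_zero]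
  norm_num

include hK hK' hKE in
lemma EKi : E * Ki = (v ^ (2 : ℤ)) • (Ki * E) := by
  have h := congrArg (fun x => Ki * x * Ki) hKE
  simp only [mul_smul_comm, smul_mul_assoc] at h
  calc E * Ki = Ki * (K * E) * Ki := by rw [← mul_assoc, hK', one_mul]
  _ = v ^ (2:ℤ) • (Ki * (E * K) * Ki) := h
  _ = v ^ (2:ℤ) • (Ki * E * (K * Ki)) := by rw [mul_assoc, mul_assoc, mul_assoc]
  _ = v ^ (2:ℤ) • (Ki * E) := by rw [hK, mul_one]

include hKF in
lemma FK : F * K = (v ^ (2 : ℤ)) • (K * F) := by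
  rw [hKF, smul_smul, ← zpow_add₀ v_ne_zero]
  norm_num

include hK hK' hKF in
lemma FKi : F * Ki = (v ^ (-2 : ℤ)) • (Ki * F) := by
  have h := congrArg (fun x => Ki * x * Ki) hKF
  simp only [mul_smul_comm, smul_mul_assoc] at h
  calc F * Ki = Ki * (K * F) * Ki := by rw [← mul_assoc, hK', one_mul]
  _ = v ^ (-2:ℤ) • (Ki * (F * K) * Ki) := h
  _ = v ^ (-2:ℤ) • (Ki * F * (K * Ki)) := by rw [mul_assoc, mul_assoc, mul_assoc]
  _ = v ^ (-2:ℤ) • (Ki * F) := by rw [hK, mul_one]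

include hK hK' hKE in
lemma EAf (x : ℤ) : E * Af K Ki x = Af K Ki (x - 2) * E := by
  rw [Af, Af, mul_sub, sub_mul, mul_smul_comm, mul_smul_comm,
    smul_mul_assoc, smul_mul_assoc, EK E K hKE, EKi E K Ki hK hK' hKE,
    smul_smul, smul_smul, ← zpow_add₀ v_ne_zero, ← zpow_add₀ v_ne_zero,
    show x + -2 = x - 2 by ring, show -x + 2 = -(x-2) by ring]

include hK hK' hKF in
lemma AfF (x : ℤ) : Af K Ki x * F = F * Af K Ki (x - 2) := by
  rw [Af, Af, sub_mul, mul_sub, smul_mul_assoc, smul_mul_assoc,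
    mul_smul_comm, mul_smul_comm, FK F K hKF, FKi F K Ki hK hK' hKF,
    smul_smul, smul_smul, ← zpow_add₀ v_ne_zero, ← zpow_add₀ v_ne_zero,
    show x - 2 + 2 = x by ring, show -(x - 2) + -2 = -x by ring]


include hK hK' in
lemma AfAf (x y : ℤ) : Af K Ki x * Af K Ki y = Af K Ki y * Af K Ki x := by
  have cKKi : Commute K Ki := by
    unfold Commute SemiconjBy
    rw [hK, hK']
  have h1 : Commute (v ^ x • K) (v ^ y • K) := ((Commute.refl K).smul_left _).smul_right _
  have h2 : Commute (v ^ x • K) (v ^ (-y) • Ki) := (cKKi.smul_left _).smul_right _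
  have h3 : Commute (v ^ (-x) • Ki) (v ^ y • K) := (cKKi.symm.smul_left _).smul_right _
  have h4 : Commute (v ^ (-x) • Ki) (v ^ (-y) • Ki) :=
    ((Commute.refl Ki).smul_left _).smul_right _
  exact (h1.sub_right h2).sub_left (h3.sub_right h4)

lemma Nb_back (c : ℤ) (t : ℕ) : Nb K Ki c (t+1) = Nb K Ki c t * Af K Ki (c - t) := rfl

lemma Nb_front (c : ℤ) (t : ℕ) : Nb K Ki c (t+1) = Af K Ki c * Nb K Ki (c-1) t := by
  induction t generalizing c with
  | zero => simp [Nb]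
  | succ u ih =>
    rw [Nb_back, ih, Nb_back, mul_assoc, show ((u+1:ℕ):ℤ) = (u:ℤ)+1 by push_cast; ring,
      show c - ((u:ℤ)+1) = c - 1 - u by ring]

include hK hK' hKE in
lemma ENb (c : ℤ) (t : ℕ) : E * Nb K Ki c t = Nb K Ki (c-2) t * E := by
  induction t generalizing c with
  | zero => simp [Nb]
  | succ u ih =>
    rw [Nb_front, ← mul_assoc, EAf E K Ki hK hK' hKE, mul_assoc, ih,
      ← mul_assoc, show c - 1 - 2 = c - 2 - 1 by ring, ← Nb_front]

include hK hK' in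
lemma AfNb (x c : ℤ) (t : ℕ) : Af K Ki x * Nb K Ki c t = Nb K Ki c t * Af K Ki x := by
  induction t with
  | zero => simp [Nb]
  | succ u ih =>
    rw [Nb_back, ← mul_assoc, ih, mul_assoc, AfAf K Ki hK hK', ← mul_assoc]

end

noncomputable def DD (t : ℕ) : RatFunc ℚ :=
  ∏ s ∈ Finset.range t, (v ^ ((s:ℤ)+1) - v ^ (-(s:ℤ)-1))

lemma DD_succ (t : ℕ) : DD (t+1) = DD t * (v ^ ((t:ℤ)+1) - v ^ (-(t:ℤ)-1)) :=
  Finset.prod_range_succ _ t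

lemma DD_ne_zero (t : ℕ) : DD t ≠ 0 := by
  induction t with
  | zero => simp [DD]
  | succ u ih =>
    rw [DD_succ]
    refine mul_ne_zero ih ?_
    have := v_zpow_sub_ne_zero (m := (u:ℤ)+1) (by omega)
    rwa [show -((u:ℤ)+1) = -(u:ℤ)-1 by ring] at this

noncomputable def Brk (K Ki : A) (c : ℤ) (t : ℕ) : A :=
  ((List.range t).map (fun s =>
    (v ^ ((s : ℤ) + 1) - v ^ (-(s : ℤ) - 1))⁻¹ •
      (v ^ (c - (s:ℤ)) • K - v ^ (-(c - (s:ℤ))) • Ki))).prod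

lemma Brk_zero (c : ℤ) : Brk K Ki c 0 = 1 := rfl

lemma Brk_succ (c : ℤ) (t : ℕ) :
    Brk K Ki c (t+1) = Brk K Ki c t *
      ((v ^ ((t : ℤ) + 1) - v ^ (-(t : ℤ) - 1))⁻¹ • Af K Ki (c - t)) := by
  rw [Brk, Brk, Af]
  simp [List.range_succ]

lemma Brk_eq (c : ℤ) (t : ℕ) : Brk K Ki c t = (DD t)⁻¹ • Nb K Ki c t := by
  induction t with
  | zero => simp [Brk_zero, Nb, DD]
  | succ u ih =>
    rw [Brk_succ, ih, DD_succ, Nb_back, smul_mul_assoc, mul_smul_comm, smul_smul, mul_inv]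


lemma Ggcomb (n : ℤ) :
    Gg K Ki 0 + qint n • Gg K Ki (n+1) = qint (n+1) • Gg K Ki n := by
  simp only [Gg, smul_sub, smul_smul, neg_zero, zpow_zero, one_smul]
  rw [sub_add_sub_comm, ← add_smul, ← add_smul]
  congr 1
  · congr 1
    linear_combination (v - v⁻¹)⁻¹ * grec1 n
  · congr 1
    linear_combination (v - v⁻¹)⁻¹ * grec2 n

lemma Afcomb (a b t : ℤ) :
    qint (a+1) • Af K Ki (2*t-a-b-1) =
      qint (a+1-t) • Af K Ki (t-a-b-1) + qint t • Af K Ki (t-b) := by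
  simp only [Af, smul_sub, smul_smul]
  rw [sub_add_sub_comm, ← add_smul, ← add_smul]
  congr 1
  · congr 1
    linear_combination sid1 a b t
  · congr 1
    linear_combination sid2 a b t

section
variable (hK : K * Ki = 1) (hK' : Ki * K = 1)
    (hEF : E * F - F * E = (v - v⁻¹)⁻¹ • (K - Ki))
    (hKE : K * E = (v ^ (2 : ℤ)) • (E * K))
    (hKF : K * F = (v ^ (-2 : ℤ)) • (F * K))

include hK hK' hKF in
lemma GgF (m : ℤ) : Gg K Ki m * F = F * Gg K Ki (m+2) := by
  rw [Gg_eq, Gg_eq, smul_mul_assoc, AfF F K Ki hK hK' hKF, mul_smul_comm,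
    show -m - 2 = -(m+2) by ring]

include hK hK' hEF hKF in
lemma EFpow (n : ℕ) :
    E * F ^ (n+1) = F ^ (n+1) * E + qint ((n:ℤ)+1) • (F ^ n * Gg K Ki n) := by
  induction n with
  | zero =>
    have h1 : E * F = F * E + (v - v⁻¹)⁻¹ • (K - Ki) := by
      rw [← hEF]; abel
    simp only [pow_one, pow_zero, one_mul, Nat.cast_zero, zero_add, qint_one, one_smul, Gg,
      neg_zero, zpow_zero, one_smul]
    exact h1
  | succ n ih =>
    have h1 : E * F = F * E + Gg K Ki 0 := by
      rw [Gg]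
      simp only [neg_zero, zpow_zero, one_smul]
      rw [← hEF]; abel
    have hGF := GgF F K Ki hK hK' hKF (n:ℤ)
    calc E * F ^ (n+2) = (E * F ^ (n+1)) * F := by rw [pow_succ, ← mul_assoc]
    _ = F ^ (n+1) * (E * F) + qint ((n:ℤ)+1) • (F ^ n * (Gg K Ki (n:ℤ) * F)) := by
        rw [ih, add_mul, smul_mul_assoc, mul_assoc, mul_assoc]
    _ = F ^ (n+1) * (F * E) + (F ^ (n+1) * Gg K Ki 0
        + qint ((n:ℤ)+1) • (F ^ (n+1) * Gg K Ki ((n:ℤ)+1+1))) := by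
        rw [h1, hGF, mul_add, add_assoc]
        congr 2
        rw [pow_succ, mul_assoc, show (n:ℤ)+1+1 = (n:ℤ)+2 by ring]
    _ = F ^ (n+2) * E + F ^ (n+1) * (Gg K Ki 0 + qint ((n:ℤ)+1) • Gg K Ki ((n:ℤ)+1+1)) := by
        rw [mul_add, ← mul_smul_comm, pow_succ, mul_assoc]
        congr 1
        rw [show n+2 = n+1+1 from rfl, pow_succ, pow_succ, mul_assoc, mul_assoc]
    _ = F ^ (n+2) * E + qint ((n:ℤ)+1+1) • (F ^ (n+1) * Gg K Ki ((n:ℤ)+1)) := by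
        rw [Ggcomb K Ki ((n:ℤ)+1), mul_smul_comm]
    _ = F ^ (n+1+1) * E + qint (((n+1:ℕ):ℤ)+1) • (F ^ (n+1) * Gg K Ki ((n+1:ℕ):ℤ)) := by
        push_cast
        ring_nf


noncomputable def Edp (E : A) (m : ℕ) : A := (qfact m)⁻¹ • E ^ m

lemma Edp_zero : Edp E 0 = 1 := by
  simp [Edp, qfact]

lemma E_Edp (m : ℕ) : E * Edp E m = qint ((m:ℤ)+1) • Edp E (m+1) := by
  rw [Edp, Edp, mul_smul_comm, smul_smul, ← pow_succ']
  congr 1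
  rw [qfact_succ, mul_inv, ← mul_assoc, mul_comm (qint ((m:ℤ)+1)), mul_assoc,
    mul_inv_cancel₀ (qint_ne_zero (by omega)), mul_one]

include hK hK' hEF hKF in
lemma EFd (m : ℕ) : E * Edp F m = Edp F m * E
    + qint (m:ℤ) • ((qfact m)⁻¹ • (F ^ (m-1) * Gg K Ki ((m:ℤ)-1))) := by
  cases m with
  | zero => simp [Edp_zero, qint_zero]
  | succ n =>
    rw [Edp, mul_smul_comm, EFpow E F K Ki hK hK' hEF hKF n, smul_add, ← smul_mul_assoc, ← Edp,
      smul_smul, smul_smul]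
    have hcast : ((n+1:ℕ):ℤ) = (n:ℤ)+1 := by push_cast; ring
    rw [hcast, show (n:ℤ)+1-1 = (n:ℤ) by ring, show n+1-1 = n from rfl, mul_comm (qint ((n:ℤ)+1))]

include hK hK' in
lemma MID (a b : ℤ) (u : ℕ) :
    qint (a+1) • Brk K Ki (2*((u:ℤ)+1)-a-b-1) (u+1)
      = qint (a-(u:ℤ)) • Brk K Ki (2*((u:ℤ)+1)-a-b-2) (u+1)
        + Gg K Ki (b-((u:ℤ)+1)) * Brk K Ki (2*((u:ℤ)+1)-a-b-2) u := by
  set c : ℤ := 2*((u:ℤ)+1)-a-b-2 with hc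
  have hd : v ^ ((u:ℤ)+1) - v ^ (-(u:ℤ)-1) ≠ 0 := by
    have := v_zpow_sub_ne_zero (m := (u:ℤ)+1) (by omega)
    rwa [show -((u:ℤ)+1) = -(u:ℤ)-1 by ring] at this
  have e1 : Brk K Ki (c+1) (u+1) = (DD (u+1))⁻¹ • (Af K Ki (c+1) * Nb K Ki c u) := by
    rw [Brk_eq, Nb_front, show c+1-1 = c by ring]
  have e2 : Brk K Ki c (u+1) = (DD (u+1))⁻¹ • (Af K Ki (c - u) * Nb K Ki c u) := by
    rw [Brk_eq, Nb_back, ← AfNb K Ki hK hK']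
  have e3 : Gg K Ki (b-((u:ℤ)+1)) * Brk K Ki c u
      = (DD (u+1))⁻¹ • (qint ((u:ℤ)+1) • (Af K Ki (((u:ℤ)+1) - b) * Nb K Ki c u)) := by
    rw [Brk_eq, Gg_eq, show -(b-((u:ℤ)+1)) = ((u:ℤ)+1) - b by ring,
      smul_mul_assoc, mul_smul_comm, smul_smul, smul_smul]
    congr 1
    rw [DD_succ, mul_inv, qint, show -((u:ℤ)+1) = -(u:ℤ)-1 by ring, div_eq_mul_inv]
    rw [show (DD u)⁻¹ * (v ^ ((u:ℤ)+1) - v ^ (-(u:ℤ)-1))⁻¹ * ((v ^ ((u:ℤ)+1) - v ^ (-(u:ℤ)-1)) * (v - v⁻¹)⁻¹)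
        = ((v ^ ((u:ℤ)+1) - v ^ (-(u:ℤ)-1))⁻¹ * (v ^ ((u:ℤ)+1) - v ^ (-(u:ℤ)-1))) * ((DD u)⁻¹ * (v - v⁻¹)⁻¹) by ring,
      inv_mul_cancel₀ hd, one_mul, mul_comm]
  have key := Afcomb K Ki a b ((u:ℤ)+1)
  rw [show 2*((u:ℤ)+1)-a-b-1 = c+1 by rw [hc]; ring, e1, e2, e3,
    smul_comm (qint (a+1)), smul_comm (qint (a-(u:ℤ))), ← smul_add]
  congr 1
  rw [← smul_mul_assoc, ← smul_mul_assoc, ← smul_mul_assoc, ← add_mul]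
  congr 1
  rw [show c+1 = 2*((u:ℤ)+1)-a-b-1 by rw [hc]; ring,
    show c-(u:ℤ) = ((u:ℤ)+1)-a-b-1 by rw [hc]; ring,
    show a-(u:ℤ) = a+1-((u:ℤ)+1) by ring]
  exact key


include hK hK' hKE in
lemma EBrk (c : ℤ) (t : ℕ) : E * Brk K Ki c t = Brk K Ki (c-2) t * E := by
  rw [Brk_eq, Brk_eq, mul_smul_comm, ENb E K Ki hK hK' hKE, smul_mul_assoc]

include hK hK' hEF hKE hKF in
lemma STEP (a b t : ℕ) (ht : t ≤ a) (ht2 : t ≤ b) (c : ℤ) :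
    E * (Edp F (b-t) * Brk K Ki c t * Edp E (a-t))
      = qint ((a:ℤ)-t+1) • (Edp F (b-t) * Brk K Ki (c-2) t * Edp E (a-t+1))
        + qint ((b:ℤ)-t) • ((qfact (b-t))⁻¹ •
            (F ^ (b-t-1) * (Gg K Ki ((b:ℤ)-t-1) * (Brk K Ki c t * Edp E (a-t))))) := by
  have hcast1 : ((a - t : ℕ) : ℤ) = (a:ℤ) - t := by
    push_cast [Nat.cast_sub ht]; ring
  have hcast2 : ((b - t : ℕ) : ℤ) = (b:ℤ) - t := by
    push_cast [Nat.cast_sub ht2]; ring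
  rw [mul_assoc (Edp F (b-t)), ← mul_assoc E, EFd E F K Ki hK hK' hEF hKF (b-t), add_mul]
  congr 1
  · rw [mul_assoc, ← mul_assoc E, EBrk E K Ki hK hK' hKE, mul_assoc (Brk K Ki (c-2) t),
      E_Edp, mul_smul_comm, mul_smul_comm, hcast1, ← mul_assoc]
  · simp only [smul_mul_assoc, mul_assoc, hcast2]


include hK hK' in
lemma KeyT (a b u : ℕ) (hu1 : u ≤ a) (hu2 : u+1 ≤ b) :
    qint ((a:ℤ)+1) • (Edp F (b-(u+1)) * Brk K Ki (2*((u+1:ℕ):ℤ)-((a:ℤ)+1)-(b:ℤ)) (u+1) *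
        Edp E (a+1-(u+1)))
      = qint ((a:ℤ)-((u+1:ℕ):ℤ)+1) • (Edp F (b-(u+1)) *
            Brk K Ki (2*((u+1:ℕ):ℤ)-(a:ℤ)-(b:ℤ)-2) (u+1) * Edp E (a-(u+1)+1))
        + qint ((b:ℤ)-(u:ℤ)) • ((qfact (b-u))⁻¹ • (F ^ (b-u-1) *
            (Gg K Ki ((b:ℤ)-(u:ℤ)-1) * (Brk K Ki (2*(u:ℤ)-(a:ℤ)-(b:ℤ)) u * Edp E (a-u))))) := by
  have hs1 : ((u+1:ℕ):ℤ) = (u:ℤ)+1 := by push_cast; ring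
  have key := congrArg (fun x => Edp F (b-(u+1)) * x * Edp E (a-u)) (MID K Ki hK hK' a b u)
  simp only [mul_add (Edp F (b-(u+1))), add_mul _ _ (Edp E (a-u)), mul_smul_comm,
    smul_mul_assoc] at key
  rw [hs1, show 2*((u:ℤ)+1)-((a:ℤ)+1)-(b:ℤ) = 2*((u:ℤ)+1)-(a:ℤ)-(b:ℤ)-1 by ring,
    show a+1-(u+1) = a-u from by omega, key,
    show 2*(u:ℤ)-(a:ℤ)-(b:ℤ) = 2*((u:ℤ)+1)-(a:ℤ)-(b:ℤ)-2 by ring,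
    show (b:ℤ)-(u:ℤ)-1 = (b:ℤ)-((u:ℤ)+1) by ring]
  congr 1
  · -- straight terms
    rw [show (a:ℤ)-((u:ℤ)+1)+1 = (a:ℤ)-(u:ℤ) by ring]
    rcases Nat.lt_or_ge u a with h | h
    · rw [show a-(u+1)+1 = a-u from by omega]
    · have hua : u = a := le_antisymm hu1 h
      subst hua
      rw [show (u:ℤ)-(u:ℤ) = 0 by ring, qint_zero, zero_smul, zero_smul]
  · -- commutator terms
    have hbu : b - u = (b-u-1)+1 := by omega
    have hbc : ((b-u-1:ℕ):ℤ)+1 = (b:ℤ)-(u:ℤ) := by omega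
    rw [hbu, qfact_succ, hbc, show b-(u+1) = b-u-1 from by omega, Edp,
      smul_mul_assoc, smul_mul_assoc, smul_smul, mul_inv,
      show qint ((b:ℤ)-(u:ℤ)) * ((qfact (b-u-1))⁻¹ * (qint ((b:ℤ)-(u:ℤ)))⁻¹)
        = (qint ((b:ℤ)-(u:ℤ)))⁻¹ * qint ((b:ℤ)-(u:ℤ)) * (qfact (b-u-1))⁻¹ by ring,
      inv_mul_cancel₀ (qint_ne_zero (by omega : (0:ℤ) < (b:ℤ)-(u:ℤ))), one_mul]
    rw [mul_assoc, mul_assoc]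
    norm_num


include hK hK' hEF hKE hKF in
lemma main (a b : ℕ) :
    Edp E a * Edp F b = ∑ t ∈ Finset.range (min a b + 1),
      Edp F (b - t) * Brk K Ki (2*(t:ℤ)-(a:ℤ)-(b:ℤ)) t * Edp E (a - t) := by
  induction a with
  | zero =>
    simp [Edp_zero, Brk_zero]
  | succ a ih =>
    push_cast
    have hq : qint ((a:ℤ)+1) ≠ 0 := qint_ne_zero (by omega)
    have hEd : Edp E (a+1) = (qint ((a:ℤ)+1))⁻¹ • (E * Edp E a) := by
      rw [E_Edp, smul_smul, inv_mul_cancel₀ hq, one_smul]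
    rw [hEd, smul_mul_assoc, mul_assoc, ih, Finset.mul_sum, inv_smul_eq_iff₀ hq]
    rw [Finset.sum_congr rfl (fun t htm =>
      STEP E F K Ki hK hK' hEF hKE hKF a b t
        (by have := Finset.mem_range.mp htm; omega)
        (by have := Finset.mem_range.mp htm; omega)
        (2*(t:ℤ)-(a:ℤ)-(b:ℤ)))]
    rw [Finset.sum_add_distrib, Finset.sum_range_succ']
    conv_rhs => rw [Finset.smul_sum, Finset.sum_range_succ']
    rw [Finset.sum_congr rfl (fun t htm =>
      KeyT E F K Ki hK hK' a b t
        (by have := Finset.mem_range.mp htm; omega)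
        (by have := Finset.mem_range.mp htm; omega))]
    rw [Finset.sum_add_distrib]
    have h0 : qint ((a:ℤ)+1) •
        (Edp F (b-0) * Brk K Ki (2*((0:ℕ):ℤ)-((a:ℤ)+1)-(b:ℤ)) 0 * Edp E (a+1-0))
        = qint ((a:ℤ)-((0:ℕ):ℤ)+1) •
          (Edp F (b-0) * Brk K Ki (2*((0:ℕ):ℤ)-(a:ℤ)-(b:ℤ)-2) 0 * Edp E (a-0+1)) := by
      rw [Brk_zero, Brk_zero]
      norm_num
    rw [h0]
    rcases Nat.lt_or_ge a b with h | h
    · have hm1 : min a b = a := by omega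
      have hm2 : min (a+1) b = a+1 := by omega
      rw [hm1, hm2, Finset.sum_range_succ _ a, Finset.sum_range_succ]
      have hz : qint ((a:ℤ)-((a+1:ℕ):ℤ)+1) = 0 := by
        rw [show (a:ℤ)-((a+1:ℕ):ℤ)+1 = 0 by push_cast; ring, qint_zero]
      rw [hz, zero_smul]
      abel
    · have hm1 : min a b = b := by omega
      have hm2 : min (a+1) b = b := by omega
      rw [hm1, hm2, Finset.sum_range_succ _ b]
      have hz : qint ((b:ℤ)-(b:ℤ)) = 0 := by
        rw [show (b:ℤ)-(b:ℤ) = 0 by ring, qint_zero]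
      rw [hz, zero_smul]
      abel

end
end Alg

/-- The standard quantum `sl₂` commutation formula for divided powers:
`E^{(a)}F^{(b)} = Σ_{t=0}^{min(a,b)} F^{(b-t)} [K; 2t-a-b choose t] E^{(a-t)}`. -/
theorem divided_power_commutation
    (A : Type*) [Ring A] [Algebra (RatFunc ℚ) A] (E F K Ki : A)
    (hK : K * Ki = 1) (hK' : Ki * K = 1)
    (hEF : E * F - F * E = (v - v⁻¹)⁻¹ • (K - Ki))
    (hKE : K * E = (v ^ (2 : ℤ)) • (E * K))
    (hKF : K * F = (v ^ (-2 : ℤ)) • (F * K))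
    (a b : ℕ) (ha : 1 ≤ a) (hb : 1 ≤ b) :
    ((qfact a)⁻¹ • E ^ a) * ((qfact b)⁻¹ • F ^ b) =
      ∑ t ∈ Finset.range (min a b + 1),
        ((qfact (b - t))⁻¹ • F ^ (b - t)) *
          ((List.range t).map (fun s =>
            (v ^ ((s : ℤ) + 1) - v ^ (-(s : ℤ) - 1))⁻¹ •
              ((v ^ ((2 * (t : ℤ) - (a : ℤ) - (b : ℤ)) - (s : ℤ))) • K
                - (v ^ (-((2 * (t : ℤ) - (a : ℤ) - (b : ℤ)) - (s : ℤ)))) • Ki))).prod *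
          ((qfact (a - t))⁻¹ • E ^ (a - t)) := by
  simpa only [Edp, Brk] using main E F K Ki hK hK' hEF hKE hKF a b
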